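/- For any u, v in Z_{2^s}, the Carlet Gray map satisfies φ_s(2^{s-1}u + v) = φ_s(2^{s-1}u) + φ_s(v). -/
import Mathlib


/-- The `i`-th bit of the natural number `n`, as an element of `ZMod 2`. -/
def bitZ (n i : ℕ) : ZMod 2 := if n.testBit i then 1 else 0

/-- Carlet's Gray map `φ_s : ZMod (2^s) → (ZMod 2)^{2^{s-1}}`:
`φ_s(u) = (u_{s-1},…,u_{s-1}) + (u_0,…,u_{s-2})·Y_{s-1}`, where `Y_{s-1}` is the
`(s-1) × 2^{s-1}` matrix whose `j`-th column is the binary expansion of `j`. -/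
def carletGray (s : ℕ) (u : ZMod (2 ^ s)) : Fin (2 ^ (s - 1)) → ZMod 2 :=
  fun j => bitZ u.val (s - 1) + ∑ i : Fin (s - 1), bitZ u.val i * bitZ (j : ℕ) i

/-- The operation `⊙` on `ZMod (2^s)`: the binary expansion of `u ⊙ v` is the
coordinatewise product (AND) of the binary expansions of `u` and `v`. -/
def odot (s : ℕ) (u v : ZMod (2 ^ s)) : ZMod (2 ^ s) :=
  ((u.val &&& v.val : ℕ) : ZMod (2 ^ s))

lemma bitZ_two_pow_self (n : ℕ) : bitZ (2 ^ n) n = 1 := by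
  simp [bitZ, Nat.testBit_two_pow_self]

lemma bitZ_two_pow_of_ne {n m : ℕ} (h : n ≠ m) : bitZ (2 ^ n) m = 0 := by
  simp [bitZ, Nat.testBit_two_pow_of_ne h]

lemma bitZ_lt_two_pow {b n : ℕ} (h : b < 2 ^ n) : bitZ b n = 0 := by
  simp [bitZ, Nat.testBit_lt_two_pow h]

/-- For any `u, v ∈ ZMod (2^s)`, `φ_s(2^{s-1}·u + v) = φ_s(2^{s-1}·u) + φ_s(v)`. -/
theorem carletGray_add_top (s : ℕ) (hs : 1 ≤ s) (u v : ZMod (2 ^ s)) :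
    carletGray s (2 ^ (s - 1) * u + v) = carletGray s (2 ^ (s - 1) * u) + carletGray s v := by
  obtain ⟨n, rfl⟩ : ∃ n, s = n + 1 := ⟨s - 1, by omega⟩
  simp only [Nat.add_sub_cancel]
  haveI : NeZero (2 ^ (n + 1)) := ⟨by positivity⟩
  have hpow : (2 : ℕ) ^ (n + 1) = 2 ^ n * 2 := pow_succ 2 n
  -- value of 2^n * u
  have ht : (2 ^ n * u : ZMod (2 ^ (n + 1))).val = 2 ^ n * (u.val % 2) := by
    have h2 : ((2 : ZMod (2 ^ (n + 1))) ^ n) = (((2 : ℕ) ^ n : ℕ) : ZMod (2 ^ (n + 1))) := by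
      push_cast; ring
    rw [h2, ZMod.val_mul, ZMod.val_natCast, Nat.mod_mul_mod]
    calc 2 ^ n * u.val % 2 ^ (n + 1) = 2 ^ n * u.val % (2 ^ n * 2) := by rw [← hpow]
      _ = 2 ^ n * (u.val % 2) := Nat.mul_mod_mul_left _ _ _
  rcases Nat.mod_two_eq_zero_or_one u.val with hu | hu
  · -- u even : 2^n * u = 0
    have h0 : (2 ^ n * u : ZMod (2 ^ (n + 1))) = 0 := by
      rw [← ZMod.val_eq_zero, ht, hu, mul_zero]
    rw [h0]
    funext j
    simp [carletGray, bitZ, ZMod.val_zero, Nat.zero_testBit]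
  · -- u odd : (2^n * u).val = 2^n
    rw [hu, mul_one] at ht
    have hb : v.val < 2 ^ (n + 1) := ZMod.val_lt v
    have hw : (2 ^ n * u + v : ZMod (2 ^ (n + 1))).val = (2 ^ n + v.val) % 2 ^ (n + 1) := by
      rw [ZMod.val_add, ht]
    -- key bit facts
    have key : bitZ (2 ^ n * u + v : ZMod (2 ^ (n + 1))).val n = 1 + bitZ v.val n ∧
        ∀ i, i < n → bitZ (2 ^ n * u + v : ZMod (2 ^ (n + 1))).val i = bitZ v.val i := by
      rcases lt_or_ge v.val (2 ^ n) with hblt | hbge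
      · have hw2 : (2 ^ n * u + v : ZMod (2 ^ (n + 1))).val = 2 ^ n + v.val := by
          rw [hw]; apply Nat.mod_eq_of_lt; omega
        have hbit : ∀ i, (2 ^ n + v.val).testBit i =
            if i < n then v.val.testBit i else Nat.testBit 1 (i - n) := by
          intro i; simpa using Nat.testBit_two_pow_mul_add 1 hblt i
        constructor
        · rw [hw2, bitZ, hbit n]
          simp [bitZ, Nat.testBit_lt_two_pow hblt]
        · intro i hi
          rw [hw2, bitZ, hbit i, if_pos hi, bitZ]
      · -- v.val ≥ 2^n : write v.val = 2^n + c
        obtain ⟨c, hc2⟩ : ∃ c, v.val = 2 ^ n + c := ⟨v.val - 2 ^ n, by omega⟩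
        have hc : c < 2 ^ n := by omega
        have hw2 : (2 ^ n * u + v : ZMod (2 ^ (n + 1))).val = c := by
          rw [hw, hc2]
          have h3 : 2 ^ n + (2 ^ n + c) = 2 ^ (n + 1) + c := by omega
          rw [h3, Nat.add_mod_left, Nat.mod_eq_of_lt (by omega)]
        have hbit : ∀ i, (2 ^ n + c).testBit i =
            if i < n then c.testBit i else Nat.testBit 1 (i - n) := by
          intro i; simpa using Nat.testBit_two_pow_mul_add 1 hc i
        constructor
        · rw [hw2, bitZ_lt_two_pow hc, hc2]
          have h4 : bitZ (2 ^ n + c) n = 1 := by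
            rw [bitZ, hbit n]; simp
          rw [h4]; decide
        · intro i hi
          rw [hw2, hc2, bitZ, bitZ, hbit i, if_pos hi]
    obtain ⟨H1, H2⟩ := key
    funext j
    simp only [carletGray, Pi.add_apply, Nat.add_sub_cancel]
    rw [H1, ht]
    have hsum1 : ∑ i : Fin (n + 1 - 1), bitZ (2 ^ n * u + v : ZMod (2 ^ (n + 1))).val i * bitZ (j : ℕ) i =
        ∑ i : Fin (n + 1 - 1), bitZ v.val i * bitZ (j : ℕ) i := by
      apply Finset.sum_congr rfl
      intro i _
      rw [H2 i (by omega : (i : ℕ) < n)]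
    have hsum2 : ∑ i : Fin (n + 1 - 1), bitZ (2 ^ n) i * bitZ (j : ℕ) i = 0 := by
      apply Finset.sum_eq_zero
      intro i _
      rw [bitZ_two_pow_of_ne (by omega : n ≠ (i : ℕ)), zero_mul]
    rw [hsum1, hsum2, bitZ_two_pow_self]
    ring
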